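/- Let ε > 0, T = min{ε, 1}, p ≥ 1, and let X denote the space of measurable U : ℝ × [0,T] → ℝ with ‖U‖ := sup_{0≤t≤T} ‖U(·,t)‖_{Lᵖ(ℝ)} < ∞. Define (𝒮U)(x,t) = -(1/(2ε²)) ∫₀ᵗ ∫_{x-(t-t₀)}^{x+(t-t₀)} sin(U(x₀,t₀) + b(x₀)) dx₀ dt₀. Then for all U, V ∈ X, ‖𝒮U - 𝒮V‖ ≤ (T²/(2ε²)) ‖U - V‖ ≤ (1/2)‖U - V‖; in particular 𝒮 (and hence A + 𝒮) is a contraction on X. -/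

import Mathlib

open MeasureTheory


noncomputable section
def sgS (t x : ℝ) : Set (ℝ × ℝ) :=
  {y | (0 < y.1 ∧ y.1 ≤ t) ∧ x - (t - y.1) < y.2 ∧ y.2 ≤ x + (t - y.1)}

theorem sgS_meas_joint (t : ℝ) :
    MeasurableSet {q : ℝ × (ℝ × ℝ) | q.2 ∈ sgS t q.1} := by
  have h1 : MeasurableSet {q : ℝ × (ℝ × ℝ) | 0 < q.2.1} :=
    measurableSet_lt measurable_const (measurable_fst.comp measurable_snd)
  have h2 : MeasurableSet {q : ℝ × (ℝ × ℝ) | q.2.1 ≤ t} :=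
    measurableSet_le (measurable_fst.comp measurable_snd) measurable_const
  have h3 : MeasurableSet {q : ℝ × (ℝ × ℝ) | q.1 - (t - q.2.1) < q.2.2} :=
    measurableSet_lt (measurable_fst.sub (measurable_const.sub
      (measurable_fst.comp measurable_snd)))
      (measurable_snd.comp measurable_snd)
  have h4 : MeasurableSet {q : ℝ × (ℝ × ℝ) | q.2.2 ≤ q.1 + (t - q.2.1)} :=
    measurableSet_le (measurable_snd.comp measurable_snd)
      (measurable_fst.add (measurable_const.sub (measurable_fst.comp measurable_snd)))
  have : {q : ℝ × (ℝ × ℝ) | q.2 ∈ sgS t q.1}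
      = ({q | 0 < q.2.1} ∩ {q | q.2.1 ≤ t}) ∩ ({q : ℝ × (ℝ × ℝ) | q.1 - (t - q.2.1) < q.2.2} ∩ {q | q.2.2 ≤ q.1 + (t - q.2.1)}) := by
    ext q; simp [sgS, and_assoc]
  rw [this]
  exact ((h1.inter h2).inter (h3.inter h4))

theorem sgS_meas (t x : ℝ) : MeasurableSet (sgS t x) := by
  have := (sgS_meas_joint t).preimage (measurable_prodMk_left (x := x))
  simpa using this

theorem sg_int_tri (t : ℝ) (ht0 : 0 ≤ t) :
    ∫ t₀ in Set.Ioc (0:ℝ) t, 2 * (t - t₀) = t ^ 2 := by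
  rw [← intervalIntegral.integral_of_le ht0]
  have : ∀ s : ℝ, 2 * (t - s) = 2 * t - 2 * s := fun s => by ring
  simp_rw [this]
  rw [intervalIntegral.integral_sub (by apply Continuous.intervalIntegrable; continuity) (by apply Continuous.intervalIntegrable; continuity)]
  simp_rw [two_mul]
  rw [intervalIntegral.integral_add (by apply Continuous.intervalIntegrable; continuity) (by apply Continuous.intervalIntegrable; continuity),
    intervalIntegral.integral_add (by apply Continuous.intervalIntegrable; continuity) (by apply Continuous.intervalIntegrable; continuity)]
  simp [integral_id, intervalIntegral.integral_const]
  ring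

-- lintegral in t₀ of the section bound
theorem sg_lint_tri (t : ℝ) (ht0 : 0 ≤ t) :
    ∫⁻ t₀ in Set.Ioc (0:ℝ) t, ENNReal.ofReal (2 * (t - t₀)) = ENNReal.ofReal (t ^ 2) := by
  rw [← ofReal_integral_eq_lintegral_ofReal]
  · rw [sg_int_tri t ht0]
  · exact (continuous_const.mul (continuous_const.sub continuous_id)).integrableOn_Ioc
  · filter_upwards [ae_restrict_mem measurableSet_Ioc] with s hs
    simp only [Pi.zero_apply]
    nlinarith [hs.2]

theorem sgS_section_t (t x : ℝ) (t₀ : ℝ) :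
    Prod.mk t₀ ⁻¹' sgS t x
      = if t₀ ∈ Set.Ioc (0:ℝ) t then Set.Ioc (x - (t - t₀)) (x + (t - t₀)) else ∅ := by
  ext x₀
  by_cases h : t₀ ∈ Set.Ioc (0:ℝ) t <;>
    simp_all [sgS, Set.mem_Ioc]

theorem sgS_measure (t : ℝ) (ht0 : 0 ≤ t) (x : ℝ) :
    (volume.prod volume) (sgS t x) = ENNReal.ofReal (t ^ 2) := by
  rw [Measure.prod_apply (sgS_meas t x)]
  have : ∀ t₀ : ℝ, volume (Prod.mk t₀ ⁻¹' sgS t x)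
      = Set.indicator (Set.Ioc (0:ℝ) t) (fun t₀ => ENNReal.ofReal (2 * (t - t₀))) t₀ := by
    intro t₀
    rw [sgS_section_t]
    by_cases h : t₀ ∈ Set.Ioc (0:ℝ) t
    · rw [if_pos h, Set.indicator_of_mem h, Real.volume_Ioc]
      congr 1; ring
    · rw [if_neg h, Set.indicator_of_notMem h, measure_empty]
  simp_rw [this]
  rw [lintegral_indicator measurableSet_Ioc]
  exact sg_lint_tri t ht0

theorem sgS_section_x (t : ℝ) (y : ℝ × ℝ) :
    ∫⁻ x, (sgS t x).indicator (1 : (ℝ × ℝ) → ENNReal) y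
      = Set.indicator (Set.Ioc (0:ℝ) t) (fun t₀ => ENNReal.ofReal (2 * (t - t₀))) y.1 := by
  have hfun : ∀ x, (sgS t x).indicator (1 : (ℝ × ℝ) → ENNReal) y
      = if y.1 ∈ Set.Ioc (0:ℝ) t then
          (Set.Ico (y.2 - (t - y.1)) (y.2 + (t - y.1))).indicator (1 : ℝ → ENNReal) x else 0 := by
    intro x
    by_cases h : y.1 ∈ Set.Ioc (0:ℝ) t
    · rw [if_pos h]
      by_cases h2 : y ∈ sgS t x
      · obtain ⟨_, h3, h4⟩ := h2
        have e1 : (sgS t x).indicator (1:(ℝ×ℝ)→ENNReal) y = 1 :=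
          Set.indicator_of_mem (show y ∈ sgS t x from ⟨⟨h.1,h.2⟩,h3,h4⟩) _
        have e2 : (Set.Ico (y.2 - (t - y.1)) (y.2 + (t - y.1))).indicator (1:ℝ→ENNReal) x = 1 :=
          Set.indicator_of_mem (show x ∈ Set.Ico (y.2 - (t - y.1)) (y.2 + (t - y.1)) from ⟨by linarith, by linarith⟩) _
        rw [e1, e2]
      · rw [Set.indicator_of_notMem h2, Set.indicator_of_notMem]
        intro ⟨h3, h4⟩
        exact h2 ⟨⟨h.1, h.2⟩, by constructor <;> linarith⟩
    · rw [if_neg h, Set.indicator_of_notMem]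
      intro h2
      exact h ⟨h2.1.1, h2.1.2⟩
  simp_rw [hfun]
  by_cases h : y.1 ∈ Set.Ioc (0:ℝ) t
  · simp only [if_pos h, Set.indicator_of_mem h]
    rw [lintegral_indicator_one measurableSet_Ico, Real.volume_Ico]
    congr 1; ring
  · have h' : ¬ (0 < y.1 ∧ y.1 ≤ t) := by simpa [Set.mem_Ioc] using h
    simp [if_neg h, Set.indicator_of_notMem h, h']

theorem sg_integrable_ind (t x : ℝ) (ht0 : 0 ≤ t) (f : ℝ × ℝ → ℝ)
    (hf : Measurable f) (hbd : ∀ y, |f y| ≤ 1) :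
    Integrable ((sgS t x).indicator f) (volume.prod volume) := by
  apply Integrable.mono' (g := (sgS t x).indicator fun _ => (1:ℝ))
  · rw [integrable_indicator_iff (sgS_meas t x)]
    refine (integrableOn_const_iff (by simp)).2 (Or.inr ?_)
    rw [sgS_measure t ht0 x]; exact ENNReal.ofReal_lt_top
  · exact (hf.indicator (sgS_meas t x)).aestronglyMeasurable
  · filter_upwards with y
    by_cases h : y ∈ sgS t x
    · rw [Set.indicator_of_mem h, Set.indicator_of_mem h]
      exact hbd y
    · rw [Set.indicator_of_notMem h, Set.indicator_of_notMem h]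
      simp

theorem sg_J_eq (t x : ℝ) (ht0 : 0 ≤ t) (f : ℝ × ℝ → ℝ)
    (hf : Measurable f) (hbd : ∀ y, |f y| ≤ 1) :
    (∫ t₀ in (0:ℝ)..t, ∫ x₀ in (x - (t - t₀))..(x + (t - t₀)), f (t₀, x₀))
      = ∫ y, (sgS t x).indicator f y ∂(volume.prod volume) := by
  rw [MeasureTheory.integral_prod _ (sg_integrable_ind t x ht0 f hf hbd)]
  have hinner : ∀ t₀ : ℝ, (∫ x₀, (sgS t x).indicator f (t₀, x₀))
      = Set.indicator (Set.Ioc (0:ℝ) t)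
          (fun t₀ => ∫ x₀ in (x - (t - t₀))..(x + (t - t₀)), f (t₀, x₀)) t₀ := by
    intro t₀
    have hsec : ∀ x₀ : ℝ, (sgS t x).indicator f (t₀, x₀)
        = (Prod.mk t₀ ⁻¹' sgS t x).indicator (fun x₀ => f (t₀, x₀)) x₀ := by
      intro x₀
      by_cases h : (t₀, x₀) ∈ sgS t x
      · rw [Set.indicator_of_mem h]
        exact (Set.indicator_of_mem h _).symm
      · rw [Set.indicator_of_notMem h]
        exact (Set.indicator_of_notMem h _).symm
    simp_rw [hsec, sgS_section_t t x t₀]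
    by_cases h : t₀ ∈ Set.Ioc (0:ℝ) t
    · rw [if_pos h, Set.indicator_of_mem h, integral_indicator measurableSet_Ioc,
        ← intervalIntegral.integral_of_le (by linarith [h.2] : x - (t - t₀) ≤ x + (t - t₀))]
    · rw [if_neg h, Set.indicator_of_notMem h]
      simp
  simp_rw [hinner]
  rw [integral_indicator measurableSet_Ioc, ← intervalIntegral.integral_of_le ht0]

theorem sg_K_meas (t : ℝ) (x : ℝ) :
    Measurable fun y : ℝ × ℝ => (sgS t x).indicator (1 : (ℝ × ℝ) → ENNReal) y :=
  measurable_one.indicator (sgS_meas t x)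

theorem sg_K_meas_x (t : ℝ) (y : ℝ × ℝ) :
    Measurable fun x : ℝ => (sgS t x).indicator (1 : (ℝ × ℝ) → ENNReal) y := by
  have hset : MeasurableSet {x : ℝ | y ∈ sgS t x} := by
    have := (sgS_meas_joint t).preimage
      (show Measurable fun x : ℝ => ((x, y) : ℝ × (ℝ × ℝ)) from measurable_id.prodMk measurable_const)
    simpa using this
  have : (fun x : ℝ => (sgS t x).indicator (1 : (ℝ × ℝ) → ENNReal) y)
      = {x : ℝ | y ∈ sgS t x}.indicator (fun _ => 1) := by
    ext x
    by_cases h : y ∈ sgS t x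
    · rw [Set.indicator_of_mem h, Set.indicator_of_mem (by exact h)]; rfl
    · rw [Set.indicator_of_notMem h, Set.indicator_of_notMem (by exact h)]
  rw [this]
  exact measurable_const.indicator hset

theorem sg_K_meas_joint (t : ℝ) :
    Measurable fun q : ℝ × (ℝ × ℝ) => (sgS t q.1).indicator (1 : (ℝ × ℝ) → ENNReal) q.2 := by
  have : (fun q : ℝ × (ℝ × ℝ) => (sgS t q.1).indicator (1 : (ℝ × ℝ) → ENNReal) q.2)
      = {q : ℝ × (ℝ × ℝ) | q.2 ∈ sgS t q.1}.indicator (fun _ => 1) := by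
    ext q
    by_cases h : q.2 ∈ sgS t q.1
    · rw [Set.indicator_of_mem h, Set.indicator_of_mem (by exact h)]; rfl
    · rw [Set.indicator_of_notMem h, Set.indicator_of_notMem (by exact h)]
  rw [this]
  exact measurable_const.indicator (sgS_meas_joint t)

theorem sg_K_sq (t x : ℝ) (y : ℝ × ℝ) (r : ℝ) (hr : 0 < r) :
    ((sgS t x).indicator (1 : (ℝ × ℝ) → ENNReal) y) ^ r
      = (sgS t x).indicator (1 : (ℝ × ℝ) → ENNReal) y := by
  by_cases h : y ∈ sgS t x
  · rw [Set.indicator_of_mem h]; simp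
  · rw [Set.indicator_of_notMem h]; exact ENNReal.zero_rpow_of_pos hr

theorem sg_lint_K (t : ℝ) (ht0 : 0 ≤ t) (x : ℝ) :
    ∫⁻ y, (sgS t x).indicator (1 : (ℝ × ℝ) → ENNReal) y ∂(volume.prod volume)
      = ENNReal.ofReal (t ^ 2) := by
  rw [lintegral_indicator_one (sgS_meas t x), sgS_measure t ht0 x]

theorem sg_holder_step (t : ℝ) (ht0 : 0 ≤ t) (x : ℝ) (r : ℝ) (hr : 1 ≤ r)
    (φ : ℝ × ℝ → ENNReal) (hφ : Measurable φ) :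
    (∫⁻ y, (sgS t x).indicator (1 : (ℝ × ℝ) → ENNReal) y * φ y ∂(volume.prod volume)) ^ r
      ≤ ENNReal.ofReal (t ^ 2) ^ (r - 1)
          * ∫⁻ y, (sgS t x).indicator (1 : (ℝ × ℝ) → ENNReal) y * φ y ^ r
              ∂(volume.prod volume) := by
  set K := fun y : ℝ × ℝ => (sgS t x).indicator (1 : (ℝ × ℝ) → ENNReal) y with hK
  rcases eq_or_lt_of_le hr with hr1 | hr1
  · subst hr1
    simp only [ENNReal.rpow_one, sub_self, ENNReal.rpow_zero, one_mul]
    exact le_refl _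
  · set q := r.conjExponent with hq
    have hconj : q.HolderConjugate r := (Real.HolderConjugate.conjExponent hr1).symm
    have hKK : ∀ y, K y * φ y = K y * (K y * φ y) := by
      intro y
      by_cases h : y ∈ sgS t x
      · simp [hK, Set.indicator_of_mem h]
      · simp [hK, Set.indicator_of_notMem h]
    have hhold := ENNReal.lintegral_mul_le_Lp_mul_Lq (volume.prod volume) hconj
      ((sg_K_meas t x).aemeasurable) (((sg_K_meas t x).mul hφ).aemeasurable)
      (f := K) (g := fun y => K y * φ y)
    have hrw1 : ∀ y, K y ^ q = K y := fun y => sg_K_sq t x y q hconj.pos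
    have hrw2 : ∀ y, (K y * φ y) ^ r = K y * φ y ^ r := by
      intro y
      rw [ENNReal.mul_rpow_of_nonneg _ _ (by linarith : (0:ℝ) ≤ r),
        sg_K_sq t x y r (by linarith)]
    calc (∫⁻ y, K y * φ y ∂(volume.prod volume)) ^ r
        = (∫⁻ y, K y * (K y * φ y) ∂(volume.prod volume)) ^ r := by
          simp_rw [← hKK]
      _ ≤ ((∫⁻ y, K y ^ q ∂(volume.prod volume)) ^ (1/q)
            * (∫⁻ y, (K y * φ y) ^ r ∂(volume.prod volume)) ^ (1/r)) ^ r := by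
          apply ENNReal.rpow_le_rpow _ (by linarith)
          exact hhold
      _ = ENNReal.ofReal (t ^ 2) ^ (r - 1)
          * ∫⁻ y, K y * φ y ^ r ∂(volume.prod volume) := by
          simp_rw [hrw1, hrw2]
          rw [sg_lint_K t ht0 x,
            ENNReal.mul_rpow_of_nonneg _ _ (by linarith : (0:ℝ) ≤ r),
            ← ENNReal.rpow_mul, ← ENNReal.rpow_mul]
          congr 2
          · rw [hq, Real.conjExponent]
            field_simp
          · field_simp; simp

theorem sg_schur (t : ℝ) (ht0 : 0 ≤ t) (r : ℝ) (hr : 1 ≤ r)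
    (φ : ℝ × ℝ → ENNReal) (hφ : Measurable φ) (N : ENNReal)
    (hN : ∀ t₀ ∈ Set.Ioc (0:ℝ) t, (∫⁻ x₀, φ (t₀, x₀) ^ r) ≤ N) :
    ∫⁻ x, (∫⁻ y, (sgS t x).indicator (1 : (ℝ × ℝ) → ENNReal) y * φ y
        ∂(volume.prod volume)) ^ r
      ≤ ENNReal.ofReal (t ^ 2) ^ (r - 1) * (ENNReal.ofReal (t ^ 2) * N) := by
  have hb1 : (0:ℝ) ≤ r - 1 := by linarith
  have hc_ne : ENNReal.ofReal (t ^ 2) ^ (r - 1) ≠ ⊤ :=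
    ENNReal.rpow_ne_top_of_nonneg hb1 ENNReal.ofReal_ne_top
  have hφr : Measurable fun y : ℝ × ℝ => φ y ^ r := hφ.pow_const r
  calc ∫⁻ x, (∫⁻ y, (sgS t x).indicator (1 : (ℝ × ℝ) → ENNReal) y * φ y
        ∂(volume.prod volume)) ^ r
      ≤ ∫⁻ x, ENNReal.ofReal (t ^ 2) ^ (r - 1)
          * ∫⁻ y, (sgS t x).indicator (1 : (ℝ × ℝ) → ENNReal) y * φ y ^ r
            ∂(volume.prod volume) := by
        exact lintegral_mono fun x => sg_holder_step t ht0 x r hr φ hφ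
    _ = ENNReal.ofReal (t ^ 2) ^ (r - 1)
        * ∫⁻ x, ∫⁻ y, (sgS t x).indicator (1 : (ℝ × ℝ) → ENNReal) y * φ y ^ r
            ∂(volume.prod volume) := by
        rw [lintegral_const_mul' _ _ hc_ne]
    _ = ENNReal.ofReal (t ^ 2) ^ (r - 1)
        * ∫⁻ y, (∫⁻ x, (sgS t x).indicator (1 : (ℝ × ℝ) → ENNReal) y)
            * φ y ^ r ∂(volume.prod volume) := by
        congr 1
        rw [lintegral_lintegral_swap]
        · congr 1; funext y
          rw [lintegral_mul_const'' _ (sg_K_meas_x t y).aemeasurable]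
        · exact ((sg_K_meas_joint t).mul (hφr.comp measurable_snd)).aemeasurable
    _ ≤ ENNReal.ofReal (t ^ 2) ^ (r - 1) * (ENNReal.ofReal (t ^ 2) * N) := by
        gcongr
        calc ∫⁻ y, (∫⁻ x, (sgS t x).indicator (1 : (ℝ × ℝ) → ENNReal) y)
              * φ y ^ r ∂(volume.prod volume)
            = ∫⁻ y, Set.indicator (Set.Ioc (0:ℝ) t)
                (fun t₀ => ENNReal.ofReal (2 * (t - t₀))) y.1
                * φ y ^ r ∂(volume.prod volume) := by
              congr 1; funext y; rw [sgS_section_x]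
          _ = ∫⁻ t₀, ∫⁻ x₀, Set.indicator (Set.Ioc (0:ℝ) t)
                (fun s => ENNReal.ofReal (2 * (t - s))) t₀ * φ (t₀, x₀) ^ r := by
              rw [MeasureTheory.lintegral_prod]
              have hind0 : Measurable fun s : ℝ => ENNReal.ofReal (2 * (t - s)) := by
                fun_prop
              have hind : Measurable fun y : ℝ × ℝ => Set.indicator (Set.Ioc (0:ℝ) t)
                  (fun s => ENNReal.ofReal (2 * (t - s))) y.1 :=
                (hind0.indicator measurableSet_Ioc).comp measurable_fst
              exact (hind.mul hφr).aemeasurable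
          _ = ∫⁻ t₀, Set.indicator (Set.Ioc (0:ℝ) t)
                (fun s => ENNReal.ofReal (2 * (t - s))) t₀
                * ∫⁻ x₀, φ (t₀, x₀) ^ r := by
              congr 1; funext t₀
              rw [lintegral_const_mul' _ _ (by
                by_cases h : t₀ ∈ Set.Ioc (0:ℝ) t
                · rw [Set.indicator_of_mem h]; exact ENNReal.ofReal_ne_top
                · rw [Set.indicator_of_notMem h]; exact ENNReal.zero_ne_top)]
          _ ≤ ∫⁻ t₀, Set.indicator (Set.Ioc (0:ℝ) t)
                (fun s => ENNReal.ofReal (2 * (t - s))) t₀ * N := by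
              apply lintegral_mono
              intro t₀
              dsimp only
              by_cases h : t₀ ∈ Set.Ioc (0:ℝ) t
              · exact mul_le_mul_right (hN t₀ h) _
              · rw [Set.indicator_of_notMem h, zero_mul, zero_mul]
          _ = ENNReal.ofReal (t ^ 2) * N := by
              have hind0 : Measurable fun s : ℝ => ENNReal.ofReal (2 * (t - s)) := by
                fun_prop
              rw [lintegral_mul_const'' _
                (hind0.indicator measurableSet_Ioc).aemeasurable,
                lintegral_indicator measurableSet_Ioc, sg_lint_tri t ht0]

theorem sin_lip' (a c : ℝ) : |Real.sin a - Real.sin c| ≤ |a - c| := by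
  rw [Real.sin_sub_sin]
  have h1 : |Real.sin ((a - c)/2)| ≤ |(a - c)/2| := Real.abs_sin_le_abs
  have h2 : |Real.cos ((a + c)/2)| ≤ 1 := Real.abs_cos_le_one _
  calc |2 * Real.sin ((a - c) / 2) * Real.cos ((a + c) / 2)|
      = 2 * |Real.sin ((a - c)/2)| * |Real.cos ((a + c)/2)| := by
        rw [abs_mul, abs_mul, abs_two]
    _ ≤ 2 * |(a - c)/2| * 1 := by
        apply mul_le_mul (by nlinarith [abs_nonneg (Real.sin ((a-c)/2))]) h2 (abs_nonneg _)
        positivity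
    _ = |a - c| := by rw [abs_div, abs_two]; ring

theorem sg_pointwise (ε t x : ℝ) (hε : 0 < ε) (ht0 : 0 ≤ t)
    (b : ℝ → ℝ) (hb : Measurable b) (U V : ℝ → ℝ → ℝ)
    (hUm : Measurable (Function.uncurry U)) (hVm : Measurable (Function.uncurry V)) :
    (‖(-(1 / (2 * ε ^ 2)) *
        ∫ t₀ in (0:ℝ)..t, ∫ x₀ in (x - (t - t₀))..(x + (t - t₀)),
          Real.sin (U x₀ t₀ + b x₀))
      - (-(1 / (2 * ε ^ 2)) *
        ∫ t₀ in (0:ℝ)..t, ∫ x₀ in (x - (t - t₀))..(x + (t - t₀)),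
          Real.sin (V x₀ t₀ + b x₀))‖₊ : ENNReal)
    ≤ ENNReal.ofReal (1 / (2 * ε ^ 2)) *
        ∫⁻ y, (sgS t x).indicator (1 : (ℝ × ℝ) → ENNReal) y
          * (‖U y.2 y.1 - V y.2 y.1‖₊ : ENNReal) ∂(volume.prod volume) := by
  set fU : ℝ × ℝ → ℝ := fun y => Real.sin (U y.2 y.1 + b y.2) with hfU
  set fV : ℝ × ℝ → ℝ := fun y => Real.sin (V y.2 y.1 + b y.2) with hfV
  have hmU : Measurable fU :=
    Real.measurable_sin.comp ((hUm.comp measurable_swap).add (hb.comp measurable_snd))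
  have hmV : Measurable fV :=
    Real.measurable_sin.comp ((hVm.comp measurable_swap).add (hb.comp measurable_snd))
  have hbU : ∀ y, |fU y| ≤ 1 := fun y => Real.abs_sin_le_one _
  have hbV : ∀ y, |fV y| ≤ 1 := fun y => Real.abs_sin_le_one _
  have hJU := sg_J_eq t x ht0 fU hmU hbU
  have hJV := sg_J_eq t x ht0 fV hmV hbV
  have hiU := sg_integrable_ind t x ht0 fU hmU hbU
  have hiV := sg_integrable_ind t x ht0 fV hmV hbV
  have key : (-(1 / (2 * ε ^ 2)) *
        ∫ t₀ in (0:ℝ)..t, ∫ x₀ in (x - (t - t₀))..(x + (t - t₀)),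
          Real.sin (U x₀ t₀ + b x₀))
      - (-(1 / (2 * ε ^ 2)) *
        ∫ t₀ in (0:ℝ)..t, ∫ x₀ in (x - (t - t₀))..(x + (t - t₀)),
          Real.sin (V x₀ t₀ + b x₀))
      = -(1 / (2 * ε ^ 2)) *
          ∫ y, ((sgS t x).indicator fU y - (sgS t x).indicator fV y)
            ∂(volume.prod volume) := by
    rw [integral_sub hiU hiV, ← hJU, ← hJV]
    ring
  rw [key]
  rw [nnnorm_mul, ENNReal.coe_mul]
  have hc : (‖-(1 / (2 * ε ^ 2))‖₊ : ENNReal) = ENNReal.ofReal (1 / (2 * ε ^ 2)) := by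
    rw [nnnorm_neg]; exact Real.enorm_eq_ofReal (by positivity)
  rw [hc]
  refine mul_le_mul_right ?_ _
  refine le_trans (enorm_integral_le_lintegral_enorm _) ?_
  apply lintegral_mono
  intro y
  dsimp only
  by_cases h : y ∈ sgS t x
  · rw [Set.indicator_of_mem h, Set.indicator_of_mem h, Set.indicator_of_mem h, Pi.one_apply, one_mul]
    change (‖fU y - fV y‖₊ : ENNReal) ≤ _
    rw [ENNReal.coe_le_coe, ← NNReal.coe_le_coe, coe_nnnorm, coe_nnnorm,
      Real.norm_eq_abs, Real.norm_eq_abs]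
    have := sin_lip' (U y.2 y.1 + b y.2) (V y.2 y.1 + b y.2)
    simpa [hfU, hfV] using this.trans_eq (by congr 1; ring)
  · rw [Set.indicator_of_notMem h, Set.indicator_of_notMem h, Set.indicator_of_notMem h,
      zero_mul, sub_zero]
    simp

theorem sg_est (ε t : ℝ) (hε : 0 < ε) (ht0 : 0 ≤ t) (p : ENNReal) (hp : 1 ≤ p)
    (b : ℝ → ℝ) (hb : Measurable b) (U V : ℝ → ℝ → ℝ)
    (hUm : Measurable (Function.uncurry U)) (hVm : Measurable (Function.uncurry V))
    (M : ENNReal)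
    (hM : ∀ t₀ ∈ Set.Ioc (0:ℝ) t, eLpNorm (fun x₀ => U x₀ t₀ - V x₀ t₀) p volume ≤ M)
    (SU SV : ℝ → ℝ → ℝ)
    (hSU : ∀ x t, SU x t = -(1 / (2 * ε ^ 2)) *
      ∫ t₀ in (0 : ℝ)..t, ∫ x₀ in (x - (t - t₀))..(x + (t - t₀)),
        Real.sin (U x₀ t₀ + b x₀))
    (hSV : ∀ x t, SV x t = -(1 / (2 * ε ^ 2)) *
      ∫ t₀ in (0 : ℝ)..t, ∫ x₀ in (x - (t - t₀))..(x + (t - t₀)),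
        Real.sin (V x₀ t₀ + b x₀)) :
    eLpNorm (fun x => SU x t - SV x t) p volume
      ≤ ENNReal.ofReal (1 / (2 * ε ^ 2)) * (ENNReal.ofReal (t ^ 2) * M) := by
  set c := ENNReal.ofReal (1 / (2 * ε ^ 2)) with hcdef
  set φ : ℝ × ℝ → ENNReal := fun y => (‖U y.2 y.1 - V y.2 y.1‖₊ : ENNReal) with hφdef
  set H : ℝ → ENNReal := fun x =>
    ∫⁻ y, (sgS t x).indicator (1 : (ℝ × ℝ) → ENNReal) y * φ y ∂(volume.prod volume)
    with hHdef
  have hφm : Measurable φ :=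
    ((hUm.comp measurable_swap).sub (hVm.comp measurable_swap)).enorm
  have hpt : ∀ x, (‖SU x t - SV x t‖₊ : ENNReal) ≤ c * H x := by
    intro x
    rw [hSU, hSV]
    exact sg_pointwise ε t x hε ht0 b hb U V hUm hVm
  by_cases hptop : p = ⊤
  · subst hptop
    have hH : ∀ x, H x ≤ ENNReal.ofReal (t ^ 2) * M := by
      have hae : ∀ᵐ y ∂(volume.prod volume), y.1 ∈ Set.Ioc (0:ℝ) t → φ y ≤ M := by
        set A := {y : ℝ × ℝ | y.1 ∈ Set.Ioc (0:ℝ) t ∧ M < φ y} with hA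
        have hAm : MeasurableSet A := by
          apply MeasurableSet.inter
          · exact measurable_fst measurableSet_Ioc
          · exact hφm measurableSet_Ioi
        have hA0 : (volume.prod volume) A = 0 := by
          rw [Measure.prod_apply hAm]
          have hz : ∀ t₀ : ℝ, volume (Prod.mk t₀ ⁻¹' A) = 0 := by
            intro t₀
            by_cases h : t₀ ∈ Set.Ioc (0:ℝ) t
            · have hsec : Prod.mk t₀ ⁻¹' A = {x₀ : ℝ | M < φ (t₀, x₀)} := by
                ext x₀
                simp only [hA, Set.mem_preimage, Set.mem_setOf_eq]
                exact ⟨fun hh => hh.2, fun hh => ⟨h, hh⟩⟩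
              rw [hsec]
              have hev : ∀ᵐ x₀ : ℝ, ¬ (M < φ (t₀, x₀)) := by
                have h1 := ae_le_eLpNormEssSup
                  (f := fun x₀ => U x₀ t₀ - V x₀ t₀) (μ := (volume : Measure ℝ))
                have h2 := hM t₀ h
                rw [eLpNorm_exponent_top] at h2
                filter_upwards [h1] with x₀ hx₀
                exact not_lt.2 (le_trans hx₀ h2)
              have := ae_iff.1 hev
              simpa using this
            · have hsec : Prod.mk t₀ ⁻¹' A = (∅ : Set ℝ) := by
                ext x₀
                simp only [hA, Set.mem_preimage, Set.mem_setOf_eq, Set.mem_empty_iff_false,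
                  iff_false, not_and]
                intro hmem
                exact absurd hmem h
              rw [hsec, measure_empty]
          simp [hz]
        have hc := (MeasureTheory.measure_eq_zero_iff_ae_notMem).1 hA0
        filter_upwards [hc] with y hy hmem
        by_contra hlt
        exact hy ⟨hmem, not_le.1 hlt⟩
      intro x
      calc H x ≤ ∫⁻ y, (sgS t x).indicator (1 : (ℝ × ℝ) → ENNReal) y * M
            ∂(volume.prod volume) := by
            apply lintegral_mono_ae
            filter_upwards [hae] with y hy
            by_cases h : y ∈ sgS t x
            · exact mul_le_mul_right (hy ⟨h.1.1, h.1.2⟩) _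
            · rw [Set.indicator_of_notMem h, zero_mul, zero_mul]
        _ = ENNReal.ofReal (t ^ 2) * M := by
            rw [lintegral_mul_const'' _ (sg_K_meas t x).aemeasurable, sg_lint_K t ht0 x]
    rw [eLpNorm_exponent_top]
    refine essSup_le_of_ae_le _ (Filter.Eventually.of_forall fun x => ?_)
    exact le_trans (hpt x) (mul_le_mul_right (hH x) _)
  · have hp0 : p ≠ 0 := fun h => by simp [h] at hp
    set r := p.toReal with hrdef
    have hr1 : 1 ≤ r := by
      have := ENNReal.toReal_mono hptop hp
      simpa using this
    have hr0 : 0 < r := lt_of_lt_of_le zero_lt_one hr1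
    have hcr_ne : c ^ r ≠ ⊤ := ENNReal.rpow_ne_top_of_nonneg hr0.le ENNReal.ofReal_ne_top
    have hN : ∀ t₀ ∈ Set.Ioc (0:ℝ) t, (∫⁻ x₀, φ (t₀, x₀) ^ r) ≤ M ^ r := by
      intro t₀ ht₀
      have h1 := hM t₀ ht₀
      rw [eLpNorm_eq_lintegral_rpow_enorm_toReal hp0 hptop] at h1
      have h2 := ENNReal.rpow_le_rpow h1 hr0.le
      rwa [← ENNReal.rpow_mul, one_div, inv_mul_cancel₀ (ne_of_gt hr0),
        ENNReal.rpow_one] at h2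
    have hschur := sg_schur t ht0 r hr1 φ hφm (M ^ r) hN
    rw [eLpNorm_eq_lintegral_rpow_enorm_toReal hp0 hptop]
    calc (∫⁻ x, (‖SU x t - SV x t‖₊ : ENNReal) ^ r) ^ (1 / r)
        ≤ (∫⁻ x, (c * H x) ^ r) ^ (1 / r) := by
          apply ENNReal.rpow_le_rpow _ (by positivity)
          exact lintegral_mono fun x => ENNReal.rpow_le_rpow (hpt x) hr0.le
      _ = (c ^ r * ∫⁻ x, H x ^ r) ^ (1 / r) := by
          congr 1
          simp_rw [ENNReal.mul_rpow_of_nonneg _ _ hr0.le]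
          rw [lintegral_const_mul' _ _ hcr_ne]
      _ ≤ (c ^ r * (ENNReal.ofReal (t ^ 2) ^ (r - 1)
            * (ENNReal.ofReal (t ^ 2) * M ^ r))) ^ (1 / r) := by
          apply ENNReal.rpow_le_rpow _ (by positivity)
          exact mul_le_mul_right hschur _
      _ = ((c * (ENNReal.ofReal (t ^ 2) * M)) ^ r) ^ (1 / r) := by
          congr 1
          have ha : ENNReal.ofReal (t ^ 2) ^ (r - 1) * ENNReal.ofReal (t ^ 2)
              = ENNReal.ofReal (t ^ 2) ^ r := by
            have h1 : ENNReal.ofReal (t ^ 2) ^ (r - 1) * ENNReal.ofReal (t ^ 2) ^ (1:ℝ)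
                = ENNReal.ofReal (t ^ 2) ^ ((r - 1) + 1) :=
              (ENNReal.rpow_add_of_nonneg _ _ (by linarith) zero_le_one).symm
            simpa [sub_add_cancel] using h1
          rw [ENNReal.mul_rpow_of_nonneg _ _ hr0.le,
            ENNReal.mul_rpow_of_nonneg _ _ hr0.le, ← ha]
          ring
      _ = c * (ENNReal.ofReal (t ^ 2) * M) := by
          rw [← ENNReal.rpow_mul, mul_one_div_cancel (ne_of_gt hr0), ENNReal.rpow_one]


/-- Contraction estimate for the sine-Gordon Duhamel operator: with
`T = min{ε,1}` and `(𝒮U)(x,t) = -(1/(2ε²))∫₀ᵗ∫_{x-(t-t₀)}^{x+(t-t₀)}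
sin(U(x₀,t₀)+b(x₀)) dx₀ dt₀`, for all `U, V` of finite `X`-norm,
`‖𝒮U - 𝒮V‖_X ≤ (T²/(2ε²))‖U - V‖_X ≤ ½‖U - V‖_X`, where
`‖W‖_X = sup_{0≤t≤T} ‖W(·,t)‖_{Lᵖ}`. -/
theorem duhamel_operator_contraction (ε : ℝ) (hε : 0 < ε)
    (T : ℝ) (hT : T = min ε 1) (p : ENNReal) (hp : 1 ≤ p)
    (b : ℝ → ℝ) (hb : Measurable b)
    (U V : ℝ → ℝ → ℝ)
    (hUm : Measurable (Function.uncurry U))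
    (hVm : Measurable (Function.uncurry V))
    (hU : (⨆ t ∈ Set.Icc (0 : ℝ) T,
      eLpNorm (fun x => U x t) p (volume : Measure ℝ)) < ⊤)
    (hV : (⨆ t ∈ Set.Icc (0 : ℝ) T,
      eLpNorm (fun x => V x t) p (volume : Measure ℝ)) < ⊤)
    (SU SV : ℝ → ℝ → ℝ)
    (hSU : ∀ x t, SU x t = -(1 / (2 * ε ^ 2)) *
      ∫ t₀ in (0 : ℝ)..t, ∫ x₀ in (x - (t - t₀))..(x + (t - t₀)),
        Real.sin (U x₀ t₀ + b x₀))
    (hSV : ∀ x t, SV x t = -(1 / (2 * ε ^ 2)) *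
      ∫ t₀ in (0 : ℝ)..t, ∫ x₀ in (x - (t - t₀))..(x + (t - t₀)),
        Real.sin (V x₀ t₀ + b x₀)) :
    (⨆ t ∈ Set.Icc (0 : ℝ) T,
        eLpNorm (fun x => SU x t - SV x t) p (volume : Measure ℝ))
      ≤ ENNReal.ofReal (T ^ 2 / (2 * ε ^ 2)) *
          (⨆ t ∈ Set.Icc (0 : ℝ) T,
            eLpNorm (fun x => U x t - V x t) p (volume : Measure ℝ)) ∧
    ENNReal.ofReal (T ^ 2 / (2 * ε ^ 2)) *
        (⨆ t ∈ Set.Icc (0 : ℝ) T,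
          eLpNorm (fun x => U x t - V x t) p (volume : Measure ℝ))
      ≤ (1 / 2 : ENNReal) *
          (⨆ t ∈ Set.Icc (0 : ℝ) T,
            eLpNorm (fun x => U x t - V x t) p (volume : Measure ℝ)) := by
  have hTε : T ≤ ε := hT ▸ min_le_left ε 1
  have hT0 : 0 < T := hT ▸ lt_min hε one_pos
  set M := ⨆ t ∈ Set.Icc (0 : ℝ) T,
    eLpNorm (fun x => U x t - V x t) p (volume : Measure ℝ) with hMdef
  constructor
  · apply iSup₂_le
    intro t ht
    have ht0 : (0:ℝ) ≤ t := ht.1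
    have htT : t ≤ T := ht.2
    have hM : ∀ t₀ ∈ Set.Ioc (0:ℝ) t,
        eLpNorm (fun x₀ => U x₀ t₀ - V x₀ t₀) p volume ≤ M := by
      intro t₀ ht₀
      exact le_iSup₂ (f := fun s (_ : s ∈ Set.Icc (0:ℝ) T) =>
        eLpNorm (fun x => U x s - V x s) p (volume : Measure ℝ)) t₀
        ⟨le_of_lt ht₀.1, ht₀.2.trans htT⟩
    refine le_trans (sg_est ε t hε ht0 p hp b hb U V hUm hVm M hM SU SV hSU hSV) ?_
    rw [← mul_assoc, ← ENNReal.ofReal_mul (by positivity)]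
    apply mul_le_mul_left
    apply ENNReal.ofReal_le_ofReal
    have ht2 : t ^ 2 ≤ T ^ 2 := by nlinarith
    calc 1 / (2 * ε ^ 2) * t ^ 2 ≤ 1 / (2 * ε ^ 2) * T ^ 2 := by
          apply mul_le_mul_of_nonneg_left ht2 (by positivity)
      _ = T ^ 2 / (2 * ε ^ 2) := by ring
  · apply mul_le_mul_left
    have h1 : T ^ 2 / (2 * ε ^ 2) ≤ 1 / 2 := by
      rw [div_le_iff₀ (by positivity)]
      nlinarith [hT0.le]
    calc ENNReal.ofReal (T ^ 2 / (2 * ε ^ 2)) ≤ ENNReal.ofReal (1 / 2) :=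
          ENNReal.ofReal_le_ofReal h1
      _ = 1 / 2 := by
          rw [ENNReal.ofReal_div_of_pos two_pos, ENNReal.ofReal_one, ENNReal.ofReal_ofNat]
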